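/- arXiv:1105.0051 — 8 statements merged into one kernel-verified Lean document; each statement's English description precedes it below -/
import Mathlib

section
/- Under the regularity constraints on the cost terms, the conditional risk of decision 1 is strictly smaller than the conditional risks of both decision 2 and the reject decision 3 if and only if q1/q2 > (λ21 − λ23)/(λ13 − λ11). (This is the 'decide y1' clause of the general decision rule for abstaining Bayesian classifiers, Theorem 1, eq. (6a).) -/
/-- Theorem 1, eq. (6a): under the regularity constraints on the cost terms,
decision 1 has strictly smaller conditional risk than both decision 2 and the
reject decision 3 iff the posterior ratio exceeds `(λ21 − λ23)/(λ13 − λ11)`. -/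
theorem decide_y1_iff
    (q1 q2 : ℝ) (hq1 : 0 < q1) (hq2 : 0 < q2) (hq : q1 + q2 = 1)
    (l11 l12 l13 l21 l22 l23 : ℝ)
    (h1 : l11 < l13) (h2 : l13 < l12)
    (h3 : 0 < (l23 - l22) / (l12 - l13))
    (h4 : (l23 - l22) / (l12 - l13) < (l21 - l22) / (l12 - l11))
    (h5 : (l21 - l22) / (l12 - l11) < (l21 - l23) / (l13 - l11)) :
    (l11 * q1 + l21 * q2 < l12 * q1 + l22 * q2 ∧
     l11 * q1 + l21 * q2 < l13 * q1 + l23 * q2) ↔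
    q1 / q2 > (l21 - l23) / (l13 - l11) := by
  have d3 : (0:ℝ) < l13 - l11 := by linarith
  have d2 : (0:ℝ) < l12 - l11 := by linarith
  constructor
  · rintro ⟨_, h⟩
    rw [gt_iff_lt, div_lt_div_iff₀ d3 hq2]
    nlinarith
  · intro h
    rw [gt_iff_lt, div_lt_div_iff₀ d3 hq2] at h
    have h5' : (l21 - l22) * (l13 - l11) < (l21 - l23) * (l12 - l11) := by
      rw [div_lt_div_iff₀ d2 d3] at h5; linarith
    constructor
    · nlinarith
    · nlinarith
end

section
/- Under the regularity constraints on the cost terms, the conditional risk of decision 2 is less than or equal to the conditional risks of both decision 1 and the reject decision 3 if and only if q1/q2 ≤ (λ23 − λ22)/(λ12 − λ13). (This is the 'decide y2' clause of the general decision rule for abstaining Bayesian classifiers, Theorem 1, eq. (6b).) -/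
/-- Theorem 1, eq. (6b): under the regularity constraints on the cost terms,
decision 2 has conditional risk less than or equal to those of decision 1 and
the reject decision 3 iff the posterior ratio is at most `(λ23 − λ22)/(λ12 − λ13)`. -/
theorem decide_y2_iff
    (q1 q2 : ℝ) (hq1 : 0 < q1) (hq2 : 0 < q2) (hq : q1 + q2 = 1)
    (l11 l12 l13 l21 l22 l23 : ℝ)
    (h1 : l11 < l13) (h2 : l13 < l12)
    (h3 : 0 < (l23 - l22) / (l12 - l13))
    (h4 : (l23 - l22) / (l12 - l13) < (l21 - l22) / (l12 - l11))
    (h5 : (l21 - l22) / (l12 - l11) < (l21 - l23) / (l13 - l11)) :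
    (l12 * q1 + l22 * q2 ≤ l11 * q1 + l21 * q2 ∧
     l12 * q1 + l22 * q2 ≤ l13 * q1 + l23 * q2) ↔
    q1 / q2 ≤ (l23 - l22) / (l12 - l13) := by
  have hd1 : (0:ℝ) < l12 - l13 := by linarith
  have hd2 : (0:ℝ) < l12 - l11 := by linarith
  rw [div_le_div_iff₀ hq2 hd1]
  have h4' : (l23 - l22) * (l12 - l11) < (l21 - l22) * (l12 - l13) := by
    rw [div_lt_div_iff₀ hd1 hd2] at h4; linarith
  constructor
  · rintro ⟨-, h⟩; nlinarith
  · intro h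
    constructor
    · nlinarith
    · nlinarith
end

section
/- Under the regularity constraints on the cost terms, the conditional risk of the reject decision 3 is strictly smaller than the conditional risks of both decision 1 and decision 2 if and only if (λ23 − λ22)/(λ12 − λ13) < q1/q2 < (λ21 − λ23)/(λ13 − λ11). (This is the 'decide y3' (reject) clause of the general decision rule for abstaining Bayesian classifiers, Theorem 1, eq. (6c).) -/
/-- Theorem 1, eq. (6c): under the regularity constraints on the cost terms,
the reject decision 3 has strictly smaller conditional risk than both
decision 1 and decision 2 iff the posterior ratio lies strictly between
`(λ23 − λ22)/(λ12 − λ13)` and `(λ21 − λ23)/(λ13 − λ11)`. -/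
theorem decide_y3_iff
    (q1 q2 : ℝ) (hq1 : 0 < q1) (hq2 : 0 < q2) (hq : q1 + q2 = 1)
    (l11 l12 l13 l21 l22 l23 : ℝ)
    (h1 : l11 < l13) (h2 : l13 < l12)
    (h3 : 0 < (l23 - l22) / (l12 - l13))
    (h4 : (l23 - l22) / (l12 - l13) < (l21 - l22) / (l12 - l11))
    (h5 : (l21 - l22) / (l12 - l11) < (l21 - l23) / (l13 - l11)) :
    (l13 * q1 + l23 * q2 < l11 * q1 + l21 * q2 ∧
     l13 * q1 + l23 * q2 < l12 * q1 + l22 * q2) ↔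
    ((l23 - l22) / (l12 - l13) < q1 / q2 ∧
     q1 / q2 < (l21 - l23) / (l13 - l11)) := by
  have hd1 : (0:ℝ) < l13 - l11 := by linarith
  have hd2 : (0:ℝ) < l12 - l13 := by linarith
  have I1 : (l13 * q1 + l23 * q2 < l11 * q1 + l21 * q2) ↔
      q1 / q2 < (l21 - l23) / (l13 - l11) := by
    rw [div_lt_div_iff₀ hq2 hd1]
    constructor <;> intro h <;> nlinarith
  have I2 : (l13 * q1 + l23 * q2 < l12 * q1 + l22 * q2) ↔
      (l23 - l22) / (l12 - l13) < q1 / q2 := by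
    rw [div_lt_div_iff₀ hd2 hq2]
    constructor <;> intro h <;> nlinarith
  rw [I1, I2, and_comm]
end

section
/- Under the regularity constraints on the cost terms, the rejection thresholds T_r1 = (λ13 − λ11)/(λ13 − λ11 + λ21 − λ23) and T_r2 = (λ23 − λ22)/(λ12 − λ13 + λ23 − λ22) satisfy 0 < T_r1 < 1, 0 < T_r2 < 1, and T_r1 + T_r2 < 1. (The threshold constraint (6e) of Theorem 1, derived from the cost constraints (6d).) -/
/-- The threshold constraint (6e) of Theorem 1: under the cost constraints (6d),
the rejection thresholds of eq. (7) satisfy `0 < T_r1 < 1`, `0 < T_r2 < 1`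
and `T_r1 + T_r2 < 1`. -/
theorem rejection_thresholds_constraints
    (l11 l12 l13 l21 l22 l23 : ℝ)
    (h1 : l11 < l13) (h2 : l13 < l12)
    (h3 : 0 < (l23 - l22) / (l12 - l13))
    (h4 : (l23 - l22) / (l12 - l13) < (l21 - l22) / (l12 - l11))
    (h5 : (l21 - l22) / (l12 - l11) < (l21 - l23) / (l13 - l11)) :
    0 < (l13 - l11) / (l13 - l11 + l21 - l23) ∧
    (l13 - l11) / (l13 - l11 + l21 - l23) < 1 ∧
    0 < (l23 - l22) / (l12 - l13 + l23 - l22) ∧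
    (l23 - l22) / (l12 - l13 + l23 - l22) < 1 ∧
    (l13 - l11) / (l13 - l11 + l21 - l23) +
      (l23 - l22) / (l12 - l13 + l23 - l22) < 1 := by
  have ha : (0:ℝ) < l13 - l11 := by linarith
  have hb : (0:ℝ) < l12 - l13 := by linarith
  have hab : (0:ℝ) < l12 - l11 := by linarith
  have hc : (0:ℝ) < l23 - l22 := (div_pos_iff.mp h3).resolve_right (fun ⟨_, h⟩ => absurd hb (by linarith)) |>.1
  have h5' : (l21 - l22) * (l13 - l11) < (l21 - l23) * (l12 - l11) :=
    (div_lt_div_iff₀ hab ha).mp h5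
  have hd : (0:ℝ) < l21 - l23 := by nlinarith
  have hp1 : (0:ℝ) < l13 - l11 + l21 - l23 := by linarith
  have hp2 : (0:ℝ) < l12 - l13 + l23 - l22 := by linarith
  have hac : (l13 - l11) * (l23 - l22) < (l12 - l13) * (l21 - l23) := by nlinarith
  refine ⟨div_pos ha (by linarith), ?_, div_pos hc (by linarith), ?_, ?_⟩
  · rw [div_lt_one (by linarith)]; linarith
  · rw [div_lt_one (by linarith)]; linarith
  · rw [div_add_div _ _ hp1.ne' hp2.ne', div_lt_one (mul_pos hp1 hp2)]
    nlinarith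
end

section
/- If the cost terms satisfy λ11 < λ13 < λ12 together with the chain of inequalities 0 < (λ23 − λ22)/(λ12 − λ13) < (λ21 − λ22)/(λ12 − λ11) < (λ21 − λ23)/(λ13 − λ11), then λ21 > λ23 > λ22. In other words, the general constraints (6d) imply Chow's intuitive cost ordering (3): a misclassification costs more than a rejection, which costs more than a correct classification, for class 2 as well. -/
/-- The general constraints (6d) imply Chow's intuitive cost ordering (3)
for class 2: a misclassification costs more than a rejection, which costs
more than a correct classification. -/
theorem cost_ordering_of_constraints
    (l11 l12 l13 l21 l22 l23 : ℝ)
    (h1 : l11 < l13) (h2 : l13 < l12)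
    (h3 : 0 < (l23 - l22) / (l12 - l13))
    (h4 : (l23 - l22) / (l12 - l13) < (l21 - l22) / (l12 - l11))
    (h5 : (l21 - l22) / (l12 - l11) < (l21 - l23) / (l13 - l11)) :
    l21 > l23 ∧ l23 > l22 := by
  have ha : (0:ℝ) < l12 - l13 := by linarith
  have hc : (0:ℝ) < l13 - l11 := by linarith
  have hA : 0 < l23 - l22 := by
    have := (div_pos_iff.mp h3)
    rcases this with ⟨h, _⟩ | ⟨_, h⟩
    · exact h
    · linarith
  have hB : 0 < (l21 - l23) / (l13 - l11) := by linarith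
  have hC : 0 < l21 - l23 := by
    have := (div_pos_iff.mp hB)
    rcases this with ⟨h, _⟩ | ⟨_, h⟩
    · exact h
    · linarith
  constructor <;> linarith
end

section
/- Parameter redundancy of cost terms in abstaining classification (Theorem 2, eq. 30, corrected): let T_r1, T_r2 ∈ (0,1) with T_r1 + T_r2 < 1, and let λ21 be any real number with T_r2/(1 − T_r2) < λ21 < (1 − T_r1)/T_r1 (a nonempty open interval). Set λ11 = λ22 = 0, λ12 = 1, λ13 = T_r1·(T_r2·λ21 + T_r2 − λ21)/(T_r1 + T_r2 − 1), and λ23 = T_r2·(T_r1·λ21 + T_r1 − 1)/(T_r1 + T_r2 − 1). Then λ13 > 0, λ23 > 0, and the threshold formulas are reproduced independently of λ21: (λ13 − λ11)/(λ13 − λ11 + λ21 − λ23) = T_r1 and (λ23 − λ22)/(λ12 − λ13 + λ23 − λ22) = T_r2. Hence a one-parameter family of distinct cost matrices induces the same pair of rejection thresholds, i.e., the six cost terms are redundant parameters for determining the abstaining Bayesian classifier. -/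
/-- Parameter redundancy of cost terms in abstaining classification
(Theorem 2, eq. 30): for fixed thresholds `T_r1, T_r2` and any admissible
`λ21`, the displayed choices of `λ13`, `λ23` (with `λ11 = λ22 = 0`, `λ12 = 1`)
are positive and reproduce the same thresholds, independently of `λ21`. -/
theorem cost_terms_redundant
    (Tr1 Tr2 l21 : ℝ)
    (h1 : 0 < Tr1) (h1' : Tr1 < 1) (h2 : 0 < Tr2) (h2' : Tr2 < 1)
    (hsum : Tr1 + Tr2 < 1)
    (hlo : Tr2 / (1 - Tr2) < l21) (hhi : l21 < (1 - Tr1) / Tr1) :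
    let l11 : ℝ := 0
    let l22 : ℝ := 0
    let l12 : ℝ := 1
    let l13 : ℝ := Tr1 * (Tr2 * l21 + Tr2 - l21) / (Tr1 + Tr2 - 1)
    let l23 : ℝ := Tr2 * (Tr1 * l21 + Tr1 - 1) / (Tr1 + Tr2 - 1)
    0 < l13 ∧ 0 < l23 ∧
    (l13 - l11) / (l13 - l11 + l21 - l23) = Tr1 ∧
    (l23 - l22) / (l12 - l13 + l23 - l22) = Tr2 := by
  have hd : Tr1 + Tr2 - 1 < 0 := by linarith
  have hd' : Tr1 + Tr2 - 1 ≠ 0 := ne_of_lt hd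
  have hAlt : Tr2 < l21 * (1 - Tr2) := by
    have := (div_lt_iff₀ (by linarith : (0:ℝ) < 1 - Tr2)).mp hlo
    linarith
  have hA : Tr2 * l21 + Tr2 - l21 < 0 := by nlinarith
  have hBlt : l21 * Tr1 < 1 - Tr1 := (lt_div_iff₀ h1).mp hhi
  have hB : Tr1 * l21 + Tr1 - 1 < 0 := by nlinarith
  have hp13 : 0 < Tr1 * (Tr2 * l21 + Tr2 - l21) / (Tr1 + Tr2 - 1) :=
    div_pos_of_neg_of_neg (by nlinarith) hd
  have hp23 : 0 < Tr2 * (Tr1 * l21 + Tr1 - 1) / (Tr1 + Tr2 - 1) :=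
    div_pos_of_neg_of_neg (by nlinarith) hd
  intro l11 l22 l12 l13 l23
  refine ⟨hp13, hp23, ?_, ?_⟩
  · have hD1 : l13 - l11 + l21 - l23 = (Tr2 * l21 + Tr2 - l21) / (Tr1 + Tr2 - 1) := by
      show Tr1 * (Tr2 * l21 + Tr2 - l21) / (Tr1 + Tr2 - 1) - 0 + l21
        - Tr2 * (Tr1 * l21 + Tr1 - 1) / (Tr1 + Tr2 - 1) = _
      field_simp
      ring
    rw [hD1, div_eq_iff (div_ne_zero (ne_of_lt hA) hd')]
    show Tr1 * (Tr2 * l21 + Tr2 - l21) / (Tr1 + Tr2 - 1) - 0 = _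
    field_simp
    ring
  · have hD2 : l12 - l13 + l23 - l22 = (Tr1 * l21 + Tr1 - 1) / (Tr1 + Tr2 - 1) := by
      show 1 - Tr1 * (Tr2 * l21 + Tr2 - l21) / (Tr1 + Tr2 - 1)
        + Tr2 * (Tr1 * l21 + Tr1 - 1) / (Tr1 + Tr2 - 1) - 0 = _
      field_simp
      ring
    rw [hD2, div_eq_iff (div_ne_zero (ne_of_lt hB) hd')]
    show Tr2 * (Tr1 * l21 + Tr1 - 1) / (Tr1 + Tr2 - 1) - 0 = _
    field_simp
    ring
end

section
/- Theorem 3 (equal-variance case, asymptotic sacrifice of the rare class): fix σ > 0 and μ1 < μ2, and for p2 ∈ (0,1) let E(p2) = ∫_ℝ min((1 − p2)·φ_{μ1,σ}(x), p2·φ_{μ2,σ}(x)) dx be the Bayes error under zero-one costs with priors p1 = 1 − p2 and p2. Then E(p2) ≤ p2 for all p2 ∈ (0,1), and E(p2)/p2 → 1 as p2 → 0⁺; i.e., as the minority class becomes rare, the Bayesian classifier's error approaches the maximum Bayesian error p_min = p2, misclassifying essentially all rare-class patterns. -/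
open MeasureTheory Filter

/-- Univariate Gaussian density with mean `μ` and standard deviation `σ`. -/
noncomputable def gaussPdf (μ σ x : ℝ) : ℝ :=
  (1 / (σ * Real.sqrt (2 * Real.pi))) * Real.exp (-((x - μ) ^ 2) / (2 * σ ^ 2))

/-- Bayes error under zero-one costs for two Gaussian classes with common
standard deviation `σ` and priors `1 - p2`, `p2`. -/
noncomputable def bayesErrorEqVar (μ1 μ2 σ p2 : ℝ) : ℝ :=
  ∫ x : ℝ, min ((1 - p2) * gaussPdf μ1 σ x) (p2 * gaussPdf μ2 σ x)

lemma gaussPdf_eq (μ σ : ℝ) (hσ : 0 < σ) (x : ℝ) :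
    gaussPdf μ σ x = ProbabilityTheory.gaussianPDFReal μ ⟨σ ^ 2, sq_nonneg σ⟩ x := by
  unfold gaussPdf ProbabilityTheory.gaussianPDFReal
  congr 1
  rw [one_div]
  congr 1
  show σ * Real.sqrt (2 * Real.pi) = Real.sqrt (2 * Real.pi * σ ^ 2)
  rw [Real.sqrt_mul (by positivity : (0:ℝ) ≤ 2 * Real.pi) (σ ^ 2), Real.sqrt_sq hσ.le, mul_comm]

lemma gaussPdf_pos (μ σ : ℝ) (hσ : 0 < σ) (x : ℝ) : 0 < gaussPdf μ σ x := by
  unfold gaussPdf; positivity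

lemma integrable_gaussPdf (μ σ : ℝ) (hσ : 0 < σ) : Integrable (gaussPdf μ σ) := by
  have := ProbabilityTheory.integrable_gaussianPDFReal μ ⟨σ ^ 2, sq_nonneg σ⟩
  exact this.congr (Filter.Eventually.of_forall fun x => (gaussPdf_eq μ σ hσ x).symm)

lemma integral_gaussPdf (μ σ : ℝ) (hσ : 0 < σ) : ∫ x, gaussPdf μ σ x = 1 := by
  have hv : (⟨σ ^ 2, sq_nonneg σ⟩ : NNReal) ≠ 0 := by
    exact NNReal.coe_ne_zero.mp (show (σ ^ 2 : ℝ) ≠ 0 by positivity)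
  rw [show (fun x => gaussPdf μ σ x) = ProbabilityTheory.gaussianPDFReal μ ⟨σ ^ 2, sq_nonneg σ⟩
    from funext (gaussPdf_eq μ σ hσ)]
  exact ProbabilityTheory.integral_gaussianPDFReal_eq_one μ hv

lemma continuous_gaussPdf (μ σ : ℝ) : Continuous (gaussPdf μ σ) := by
  unfold gaussPdf; fun_prop

/-- Theorem 3 (equal-variance case): the Bayes error is at most the minority
prior `p2`, and as the minority class becomes rare the error asymptotically
equals `p2`, i.e. essentially all rare-class patterns are misclassified. -/
theorem bayes_sacrifices_rare_class_equal_variance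
    (μ1 μ2 σ : ℝ) (hσ : 0 < σ) (hμ : μ1 < μ2) :
    (∀ p2 : ℝ, p2 ∈ Set.Ioo (0 : ℝ) 1 → bayesErrorEqVar μ1 μ2 σ p2 ≤ p2) ∧
    Tendsto (fun p2 => bayesErrorEqVar μ1 μ2 σ p2 / p2)
      (nhdsWithin 0 (Set.Ioi 0)) (nhds 1) := by
  set f1 := gaussPdf μ1 σ with hf1
  set f2 := gaussPdf μ2 σ with hf2
  have hf2int : Integrable f2 := integrable_gaussPdf μ2 σ hσ
  constructor
  · intro p2 hp2
    have h : bayesErrorEqVar μ1 μ2 σ p2 ≤ ∫ x, p2 * f2 x := by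
      apply integral_mono_of_nonneg
      · refine Filter.Eventually.of_forall fun x => le_min ?_ ?_
        · exact mul_nonneg (by linarith [hp2.2]) (gaussPdf_pos μ1 σ hσ x).le
        · exact mul_nonneg hp2.1.le (gaussPdf_pos μ2 σ hσ x).le
      · exact hf2int.const_mul p2
      · exact Filter.Eventually.of_forall fun x => min_le_right _ _
    calc bayesErrorEqVar μ1 μ2 σ p2 ≤ ∫ x, p2 * f2 x := h
      _ = p2 * ∫ x, f2 x := integral_const_mul p2 _
      _ = p2 := by rw [integral_gaussPdf μ2 σ hσ]; ring
  · -- the limit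
    have key : Tendsto (fun p2 => ∫ x, min ((1 - p2) / p2 * f1 x) (f2 x))
        (nhdsWithin 0 (Set.Ioi 0)) (nhds (∫ x, f2 x)) := by
      apply tendsto_integral_filter_of_dominated_convergence f2
      · refine Filter.Eventually.of_forall fun p => ?_
        exact ((continuous_const.mul (continuous_gaussPdf μ1 σ)).min
          (continuous_gaussPdf μ2 σ)).aestronglyMeasurable
      · filter_upwards [Ioo_mem_nhdsGT (by norm_num : (0:ℝ) < 1)]
          with p hp
        refine Filter.Eventually.of_forall fun x => ?_
        have h01 : 0 ≤ (1 - p) / p * f1 x :=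
          mul_nonneg (div_nonneg (by linarith [hp.2]) hp.1.le) (gaussPdf_pos μ1 σ hσ x).le
        rw [Real.norm_eq_abs, abs_of_nonneg (le_min h01 (gaussPdf_pos μ2 σ hσ x).le)]
        exact min_le_right _ _
      · exact hf2int
      · refine Filter.Eventually.of_forall fun x => ?_
        have hdiv : Tendsto (fun p : ℝ => (1 - p) / p) (nhdsWithin 0 (Set.Ioi 0)) atTop := by
          have h1 : Tendsto (fun p : ℝ => 1 - p) (nhdsWithin 0 (Set.Ioi 0)) (nhds 1) := by
            have := (tendsto_const_nhds.sub tendsto_id :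
              Tendsto (fun p : ℝ => 1 - p) (nhds 0) (nhds (1 - 0)))
            simpa using this.mono_left nhdsWithin_le_nhds
          simpa [div_eq_mul_inv] using h1.pos_mul_atTop one_pos tendsto_inv_nhdsGT_zero
        have hev : ∀ᶠ p in nhdsWithin (0:ℝ) (Set.Ioi 0),
            min ((1 - p) / p * f1 x) (f2 x) = f2 x := by
          filter_upwards [hdiv.eventually_ge_atTop (f2 x / f1 x)] with p hp
          rw [min_eq_right]
          rw [div_le_iff₀ (gaussPdf_pos μ1 σ hσ x)] at hp
          linarith
        have hev' : (fun p : ℝ => min ((1 - p) / p * f1 x) (f2 x))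
            =ᶠ[nhdsWithin 0 (Set.Ioi 0)] fun _ => f2 x := hev
        exact Tendsto.congr' hev'.symm tendsto_const_nhds
    rw [integral_gaussPdf μ2 σ hσ] at key
    refine key.congr' ?_
    filter_upwards [self_mem_nhdsWithin] with p hp
    have hp0 : (0:ℝ) < p := hp
    rw [bayesErrorEqVar, ← integral_div]
    congr 1
    funext x
    rw [← min_div_div_right hp0.le]
    congr 1 <;> field_simp <;> ring
end

section
/- Modified upper bound on the Bayesian error (Appendix B, eq. B5): let p(t, y) be a joint probability mass function on {1,2} × F, with F a finite set, with marginals p(t=1) = p1 > 0, p(t=2) = p2 > 0, and p(y) > 0 for all y ∈ F. The Bayes error of the optimal decision based on Y is E* = Σ_{y ∈ F} min(p(1,y), p(2,y)). Then E* ≤ min(p1, p2, H(T|Y)/2), where H(T|Y) is the conditional entropy of T given Y in bits; i.e., the Kovalevskij upper bound H(T|Y)/2 can be tightened by the minority prior min(p1, p2). -/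
open Finset

lemma key_binEntropy (q : ℝ) (h0 : 0 ≤ q) (h1 : q ≤ 1) :
    2 * min q (1 - q) * Real.log 2 ≤ Real.binEntropy q := by
  have main : ∀ r : ℝ, 0 ≤ r → r ≤ 2⁻¹ → 2 * r * Real.log 2 ≤ Real.binEntropy r := by
    intro r hr0 hr1
    have hc := (Real.strictConcave_binEntropy.concaveOn).2
      (show (0:ℝ) ∈ Set.Icc (0:ℝ) 1 by norm_num)
      (show (2:ℝ)⁻¹ ∈ Set.Icc (0:ℝ) 1 by norm_num)
      (show (0:ℝ) ≤ 1 - 2*r by linarith) (show (0:ℝ) ≤ 2*r by linarith)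
      (show (1 - 2*r) + 2*r = 1 by ring)
    simp only [smul_eq_mul, Real.binEntropy_zero, Real.binEntropy_two_inv, mul_zero,
      zero_add, add_zero] at hc
    calc 2 * r * Real.log 2 ≤ Real.binEntropy (2*r*2⁻¹) := hc
    _ = Real.binEntropy r := by rw [show 2*r*2⁻¹ = r by ring]
  rcases le_total q 2⁻¹ with h | h
  · have : min q (1-q) = q := min_eq_left (by linarith)
    rw [this]; exact main q h0 h
  · have : min q (1-q) = 1 - q := min_eq_right (by linarith)
    rw [this, ← Real.binEntropy_one_sub q]
    exact main (1-q) (by linarith) (by linarith)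

lemma pointwise_bd (a b : ℝ) (ha : 0 ≤ a) (hb : 0 ≤ b) (hs : 0 < a + b) :
    min a b ≤ (-(a * Real.logb 2 (a / (a+b)) + b * Real.logb 2 (b / (a+b)))) / 2 := by
  set s := a + b with hsdef
  have hq0 : 0 ≤ a / s := div_nonneg ha hs.le
  have hq1 : a / s ≤ 1 := by
    rw [div_le_one hs]; linarith
  have h1q : 1 - a / s = b / s := by field_simp; linarith
  have hent : s * Real.binEntropy (a / s) =
      -(a * Real.log (a / s) + b * Real.log (b / s)) := by
    rw [Real.binEntropy, h1q, Real.log_inv, Real.log_inv]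
    field_simp
    ring
  have hkey := key_binEntropy (a / s) hq0 hq1
  rw [h1q] at hkey
  have hmin : min a b = s * min (a/s) (b/s) := by
    rcases le_total a b with h | h
    · rw [min_eq_left h, min_eq_left (by gcongr), mul_div_cancel₀ _ hs.ne']
    · rw [min_eq_right h, min_eq_right (by gcongr), mul_div_cancel₀ _ hs.ne']
  have hlog2 : (0:ℝ) < Real.log 2 := Real.log_pos (by norm_num)
  have hmul : s * (2 * min (a/s) (b/s) * Real.log 2) ≤ s * Real.binEntropy (a/s) :=
    mul_le_mul_of_nonneg_left hkey hs.le
  rw [hent] at hmul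
  rw [Real.logb, Real.logb, hmin]
  have heq : -(a * (Real.log (a/s) / Real.log 2) + b * (Real.log (b/s) / Real.log 2)) / 2
      = (-(a * Real.log (a/s) + b * Real.log (b/s))) / (2 * Real.log 2) := by
    ring
  rw [heq, le_div_iff₀ (by positivity)]
  nlinarith [hmul]

/-- Modified upper bound on the Bayesian error (Appendix B, eq. B5): for a
joint pmf `p(t, y)` on `{1,2} × F` with positive marginals, the Bayes error
`E* = Σ_y min(p(1,y), p(2,y))` is at most `min(p1, p2, H(T|Y)/2)`. -/
theorem modified_upper_bound_bayes_error
    {F : Type*} [Fintype F]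
    (p : Fin 2 → F → ℝ)
    (hnn : ∀ t y, 0 ≤ p t y)
    (hsum : (∑ y : F, p 0 y) + (∑ y : F, p 1 y) = 1)
    (hp1 : 0 < ∑ y : F, p 0 y) (hp2 : 0 < ∑ y : F, p 1 y)
    (hpy : ∀ y : F, 0 < p 0 y + p 1 y) :
    (∑ y : F, min (p 0 y) (p 1 y)) ≤
      min (∑ y : F, p 0 y)
        (min (∑ y : F, p 1 y)
          ((-(∑ y : F, (p 0 y * Real.logb 2 (p 0 y / (p 0 y + p 1 y)) +
                p 1 y * Real.logb 2 (p 1 y / (p 0 y + p 1 y))))) / 2)) := by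
  refine le_min (sum_le_sum fun y _ => min_le_left _ _)
    (le_min (sum_le_sum fun y _ => min_le_right _ _) ?_)
  have h2 : (∑ y : F, -(p 0 y * Real.logb 2 (p 0 y / (p 0 y + p 1 y)) +
      p 1 y * Real.logb 2 (p 1 y / (p 0 y + p 1 y)))/2) =
      -((∑ y : F, (p 0 y * Real.logb 2 (p 0 y / (p 0 y + p 1 y)) +
      p 1 y * Real.logb 2 (p 1 y / (p 0 y + p 1 y))))/2) := by
    rw [← Finset.sum_div, Finset.sum_neg_distrib, neg_div]
  rw [neg_div, ← h2]
  refine sum_le_sum fun y _ => ?_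
  simpa [neg_div] using pointwise_bd (p 0 y) (p 1 y) (hnn 0 y) (hnn 1 y) (hpy y)
end
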